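/- Let m,n∈ℕ₀ and suppose a_j<a_n for all 0≤j<n and a_j=a_n for all n≤j≤n+m. Then for any t>0, any 0≤k≤n and any 0≤i≤m, I_{n+m}(t;a_0,…,a_{n+m}) ≤ (t^i/i!)·I_{n+m−i−k}(t;a_k,…,a_{n+m−i})·∏_{j=1}^{k} 1/(a_n−a_{j−1}). -/

import Mathlib

open MeasureTheory Filter

section AuxStatement10
open Real Set

lemma aux_measurableSet (N : ℕ) (t : ℝ) :
    MeasurableSet {y : Fin N → ℝ | (∀ i, 0 ≤ y i) ∧ ∑ i, y i < t} := by
  have : {y : Fin N → ℝ | (∀ i, 0 ≤ y i) ∧ ∑ i, y i < t}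
      = (⋂ i, {y : Fin N → ℝ | 0 ≤ y i}) ∩ {y : Fin N → ℝ | ∑ i, y i < t} := by
    ext y; simp [Set.mem_iInter]
  rw [this]
  exact (MeasurableSet.iInter fun i =>
      measurableSet_le measurable_const (measurable_pi_apply i)).inter
    (measurableSet_lt (Finset.measurable_sum _ fun i _ => measurable_pi_apply i) measurable_const)

lemma aux_intOn {c : ℝ} (hc : 0 < c) : IntegrableOn (fun x => Real.exp (-(c * x))) (Ici (0:ℝ)) := by
  have := exp_neg_integrableOn_Ioi 0 hc
  rw [integrableOn_Ici_iff_integrableOn_Ioi]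
  simpa [neg_mul] using this

lemma aux_lintegral_exp {c : ℝ} (hc : 0 < c) :
    ∫⁻ x : ℝ, Set.indicator (Set.Ici 0) (fun x => ENNReal.ofReal (Real.exp (-(c * x)))) x
      = ENNReal.ofReal c⁻¹ := by
  rw [lintegral_indicator measurableSet_Ici]
  rw [← MeasureTheory.ofReal_integral_eq_lintegral_ofReal (aux_intOn hc)
      (ae_of_all _ fun x => (Real.exp_pos _).le)]
  congr 1
  rw [integral_Ici_eq_integral_Ioi]
  have hderiv : ∀ x ∈ Ici (0:ℝ), HasDerivAt (fun x => -Real.exp (-(c*x)) / c)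
      (Real.exp (-(c*x))) x := by
    intro x _
    have h1 : HasDerivAt (fun x : ℝ => -(c*x)) (-c) x := by
      have h := ((hasDerivAt_id x).const_mul c).neg
      exact h.congr_deriv (by ring)
    have h2 := (h1.exp.neg).div_const c
    exact h2.congr_deriv (by rw [div_eq_iff hc.ne']; ring)
  have htend : Tendsto (fun x => -Real.exp (-(c*x)) / c) atTop (nhds 0) := by
    have : Tendsto (fun x : ℝ => -(c*x)) atTop atBot :=
      tendsto_neg_atBot_iff.mpr (tendsto_id.const_mul_atTop hc)
    have := (Real.tendsto_exp_atBot.comp this).neg.div_const c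
    simpa using this
  rw [integral_Ioi_of_hasDerivAt_of_tendsto' hderiv
    ((aux_intOn hc).mono_set Ioi_subset_Ici_self) htend]
  have : -rexp (-(c * 0)) / c = -c⁻¹ := by
    rw [mul_zero, neg_zero, Real.exp_zero]
    ring
  rw [this]
  ring

lemma aux_vol_univ_fin0 : (volume : Measure (Fin 0 → ℝ)) Set.univ = 1 := by
  simp [MeasureTheory.volume_pi, Measure.pi_of_empty]

lemma aux_lintegral_pi_prod : ∀ {N : ℕ} (f : Fin N → ℝ → ENNReal), (∀ j, Measurable (f j)) →
    ∫⁻ x : Fin N → ℝ, ∏ j, f j (x j) = ∏ j, ∫⁻ y : ℝ, f j y := by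
  intro N
  induction N with
  | zero =>
    intro f _
    simp only [Finset.univ_eq_empty, Finset.prod_empty, lintegral_const, one_mul]
    exact aux_vol_univ_fin0
  | succ N ih =>
    intro f hf
    have mp := (volume_preserving_piFinSuccAbove (fun _ : Fin (N+1) => ℝ) 0).symm
    have hmeas : Measurable fun x : Fin (N+1) → ℝ => ∏ j, f j (x j) :=
      Finset.measurable_prod _ fun j _ => (hf j).comp (measurable_pi_apply j)
    rw [← mp.lintegral_comp hmeas]
    have : ∀ p : ℝ × (Fin N → ℝ),
        (∏ j, f j (((MeasurableEquiv.piFinSuccAbove (fun _ : Fin (N+1) => ℝ) 0).symm p) j))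
        = f 0 p.1 * ∏ j : Fin N, f j.succ (p.2 j) := by
      rintro ⟨x, z⟩
      rw [Fin.prod_univ_succ]
      have e0 : ((MeasurableEquiv.piFinSuccAbove (fun _ : Fin (N+1) => ℝ) 0).symm (x, z)) 0 = x := by
        simp [MeasurableEquiv.piFinSuccAbove_symm_apply]
      have es : ∀ j : Fin N,
          ((MeasurableEquiv.piFinSuccAbove (fun _ : Fin (N+1) => ℝ) 0).symm (x, z)) j.succ = z j := by
        intro j
        rw [MeasurableEquiv.piFinSuccAbove_symm_apply]
        simp [Fin.insertNthEquiv]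
      rw [e0]
      exact congrArg (f 0 x * ·) (Finset.prod_congr rfl fun j _ => by rw [es j])
    simp_rw [this]
    rw [MeasureTheory.Measure.volume_eq_prod, lintegral_prod_mul (f := f 0)
      (g := fun z : Fin N → ℝ => ∏ j : Fin N, f j.succ (z j)) ((hf 0).aemeasurable)
      (Finset.measurable_prod Finset.univ (fun (j : Fin N) _ =>
        ((hf j.succ).comp (measurable_pi_apply j)))).aemeasurable]
    rw [Fin.prod_univ_succ]
    congr 1
    exact ih _ fun j => hf j.succ

lemma aux_simplex_empty {N : ℕ} {u : ℝ} (hu : u ≤ 0) :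
    {y : Fin N → ℝ | (∀ i, 0 ≤ y i) ∧ ∑ i, y i < u} = ∅ := by
  ext y
  simp only [Set.mem_setOf_eq, Set.mem_empty_iff_false, iff_false, not_and, not_lt]
  intro hy
  exact le_trans hu (Finset.sum_nonneg fun i _ => hy i)

lemma aux_volume_simplex : ∀ (N : ℕ) (t : ℝ), 0 < t →
    volume {y : Fin N → ℝ | (∀ i, 0 ≤ y i) ∧ ∑ i, y i < t}
      = ENNReal.ofReal (t ^ N / N.factorial) := by
  intro N
  induction N with
  | zero =>
    intro t ht
    have : {y : Fin 0 → ℝ | (∀ i, 0 ≤ y i) ∧ ∑ i, y i < t} = Set.univ := by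
      ext y
      simp only [Set.mem_setOf_eq, Set.mem_univ, iff_true]
      exact ⟨fun i => i.elim0, by simpa using ht⟩
    rw [this, aux_vol_univ_fin0]
    norm_num
  | succ N ih =>
    intro t ht
    set e := MeasurableEquiv.piFinSuccAbove (fun _ : Fin (N+1) => ℝ) 0 with he
    have mp := volume_preserving_piFinSuccAbove (fun _ : Fin (N+1) => ℝ) 0
    set T : Set (ℝ × (Fin N → ℝ)) :=
      {p | 0 ≤ p.1 ∧ (∀ i, 0 ≤ p.2 i) ∧ p.1 + ∑ i, p.2 i < t} with hT
    have hTmeas : MeasurableSet T := by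
      have : T = {p : ℝ × (Fin N → ℝ) | 0 ≤ p.1} ∩
          ((⋂ i, {p : ℝ × (Fin N → ℝ) | 0 ≤ p.2 i}) ∩
            {p : ℝ × (Fin N → ℝ) | p.1 + ∑ i, p.2 i < t}) := by
        ext p; simp [hT, Set.mem_iInter, and_assoc]
      rw [this]
      exact (measurableSet_le measurable_const measurable_fst).inter
        ((MeasurableSet.iInter fun i => measurableSet_le measurable_const
          ((measurable_pi_apply i).comp measurable_snd)).inter
        (measurableSet_lt (measurable_fst.add
          (Finset.measurable_sum _ fun i _ => (measurable_pi_apply i).comp measurable_snd))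
          measurable_const))
    have hpre : e ⁻¹' T = {y : Fin (N+1) → ℝ | (∀ i, 0 ≤ y i) ∧ ∑ i, y i < t} := by
      ext y
      simp only [Set.mem_preimage, hT, Set.mem_setOf_eq, he,
        MeasurableEquiv.piFinSuccAbove_apply]
      constructor
      · rintro ⟨h0, hs, hsum⟩
        refine ⟨fun i => ?_, ?_⟩
        · rcases Fin.eq_zero_or_eq_succ i with rfl | ⟨j, rfl⟩
          · exact h0
          · simpa [Fin.tail] using hs j
        · rw [Fin.sum_univ_succ]
          simpa [Fin.tail] using hsum
      · rintro ⟨hpos, hsum⟩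
        refine ⟨hpos 0, fun i => by simpa [Fin.tail] using hpos _, ?_⟩
        rw [Fin.sum_univ_succ] at hsum
        simpa [Fin.tail] using hsum
    have hvol : volume {y : Fin (N+1) → ℝ | (∀ i, 0 ≤ y i) ∧ ∑ i, y i < t}
        = (volume : Measure (ℝ × (Fin N → ℝ))) T := by
      rw [← hpre]
      exact mp.measure_preimage hTmeas.nullMeasurableSet
    rw [hvol, MeasureTheory.Measure.volume_eq_prod, Measure.prod_apply hTmeas]
    have hsec : ∀ x : ℝ, volume (Prod.mk x ⁻¹' T)
        = Set.indicator (Set.Ico 0 t) (fun x => ENNReal.ofReal ((t - x) ^ N / N.factorial)) x := by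
      intro x
      by_cases hx : x ∈ Set.Ico 0 t
      · rw [Set.indicator_of_mem hx]
        have : Prod.mk x ⁻¹' T = {z : Fin N → ℝ | (∀ i, 0 ≤ z i) ∧ ∑ i, z i < t - x} := by
          ext z
          simp only [Set.mem_preimage, hT, Set.mem_setOf_eq]
          constructor
          · rintro ⟨_, hz, hsum⟩; exact ⟨hz, by linarith⟩
          · rintro ⟨hz, hsum⟩; exact ⟨hx.1, hz, by linarith⟩
        rw [this, ih (t - x) (by linarith [hx.2])]
      · rw [Set.indicator_of_notMem hx]
        rcases not_and_or.mp hx with hx0 | hxt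
        · have : Prod.mk x ⁻¹' T = ∅ := by
            ext z
            simp only [Set.mem_preimage, hT, Set.mem_setOf_eq, Set.mem_empty_iff_false, iff_false]
            push_neg at hx0
            rintro ⟨h0, -, -⟩
            linarith
          rw [this]; simp
        · have hxt' : t ≤ x := not_lt.mp hxt
          have : Prod.mk x ⁻¹' T = ∅ := by
            ext z
            simp only [Set.mem_preimage, hT, Set.mem_setOf_eq, Set.mem_empty_iff_false, iff_false]
            rintro ⟨hx0, hz, hsum⟩
            have : (0:ℝ) ≤ ∑ i, z i := Finset.sum_nonneg fun i _ => hz i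
            linarith
          rw [this]; simp
    simp_rw [hsec]
    rw [lintegral_indicator measurableSet_Ico]
    rw [← MeasureTheory.ofReal_integral_eq_lintegral_ofReal]
    · congr 1
      have h1 : ∫ x in Set.Ico (0:ℝ) t, (t - x) ^ N / N.factorial
          = ∫ x in (0:ℝ)..t, (t - x) ^ N / N.factorial := by
        rw [MeasureTheory.integral_Ico_eq_integral_Ioo, intervalIntegral.integral_of_le ht.le,
          MeasureTheory.integral_Ioc_eq_integral_Ioo]
      rw [h1]
      rw [intervalIntegral.integral_div]
      have h2 : ∫ x in (0:ℝ)..t, (t - x) ^ N = ∫ x in (0:ℝ)..t, x ^ N := by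
        have := intervalIntegral.integral_comp_sub_left (a := 0) (b := t)
          (fun u : ℝ => u ^ N) t
        simpa using this
      rw [h2, integral_pow]
      rw [Nat.factorial_succ]
      push_cast
      field_simp
      simp
    · refine MeasureTheory.IntegrableOn.mono_set ?_ Set.Ico_subset_Icc_self
      apply Continuous.integrableOn_Icc
      continuity
    · refine (ae_restrict_iff' measurableSet_Ico).mpr (ae_of_all _ fun x hx => ?_)
      exact div_nonneg (pow_nonneg (by linarith [hx.2]) N) (Nat.cast_nonneg _)

noncomputable def finSplit (p q : ℕ) : ((Fin p → ℝ) × (Fin q → ℝ)) ≃ᵐ (Fin (p+q) → ℝ) :=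
  (MeasurableEquiv.sumPiEquivProdPi (fun _ : Fin p ⊕ Fin q => ℝ)).symm.trans
    (MeasurableEquiv.piCongrLeft (fun _ => ℝ) finSumFinEquiv)

lemma finSplit_mp (p q : ℕ) : MeasurePreserving (finSplit p q) volume volume := by
  have h1 : MeasurePreserving
      (MeasurableEquiv.sumPiEquivProdPi (fun _ : Fin p ⊕ Fin q => ℝ)).symm volume volume :=
    volume_measurePreserving_sumPiEquivProdPi_symm _
  have h2 : MeasurePreserving
      (MeasurableEquiv.piCongrLeft (fun _ : Fin (p+q) => ℝ) finSumFinEquiv) volume volume :=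
    volume_measurePreserving_piCongrLeft _ finSumFinEquiv
  exact h2.comp h1

lemma finSplit_apply (p q : ℕ) (u : Fin p → ℝ) (v : Fin q → ℝ) (w : Fin p ⊕ Fin q) :
    finSplit p q (u, v) (finSumFinEquiv w) = Sum.elim u v w := by
  show (MeasurableEquiv.piCongrLeft (fun _ => ℝ) finSumFinEquiv)
      ((MeasurableEquiv.sumPiEquivProdPi (fun _ : Fin p ⊕ Fin q => ℝ)).symm (u, v))
      (finSumFinEquiv w) = Sum.elim u v w
  rw [MeasurableEquiv.coe_piCongrLeft, Equiv.piCongrLeft_apply_apply,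
    MeasurableEquiv.coe_sumPiEquivProdPi_symm]
  cases w <;> rfl

lemma finSplit_apply_castAdd (p q : ℕ) (u : Fin p → ℝ) (v : Fin q → ℝ) (j : Fin p) :
    finSplit p q (u, v) (Fin.castAdd q j) = u j := by
  have := finSplit_apply p q u v (Sum.inl j)
  simpa using this

lemma finSplit_apply_natAdd (p q : ℕ) (u : Fin p → ℝ) (v : Fin q → ℝ) (j : Fin q) :
    finSplit p q (u, v) (Fin.natAdd p j) = v j := by
  have := finSplit_apply p q u v (Sum.inr j)
  simpa using this

lemma finSplit_sum (p q : ℕ) (u : Fin p → ℝ) (v : Fin q → ℝ) (g : Fin (p+q) → ℝ → ℝ) :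
    ∑ i : Fin (p+q), g i (finSplit p q (u, v) i)
      = (∑ j : Fin p, g (Fin.castAdd q j) (u j)) + ∑ j : Fin q, g (Fin.natAdd p j) (v j) := by
  rw [← Fintype.sum_equiv finSumFinEquiv
    (fun w => g (finSumFinEquiv w) (finSplit p q (u, v) (finSumFinEquiv w)))
    (fun i => g i (finSplit p q (u, v) i)) (fun w => rfl)]
  rw [Fintype.sum_sum_type]
  congr 1
  · exact Finset.sum_congr rfl fun j _ => by
      rw [finSplit_apply]; simp [finSumFinEquiv_apply_left]
  · exact Finset.sum_congr rfl fun j _ => by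
      rw [finSplit_apply]; simp [finSumFinEquiv_apply_right]

lemma finSplit_nonneg (p q : ℕ) (u : Fin p → ℝ) (v : Fin q → ℝ) :
    (∀ i, 0 ≤ finSplit p q (u, v) i) ↔ (∀ j, 0 ≤ u j) ∧ (∀ j, 0 ≤ v j) := by
  constructor
  · intro h
    exact ⟨fun j => by simpa [finSplit_apply_castAdd] using h (Fin.castAdd q j),
           fun j => by simpa [finSplit_apply_natAdd] using h (Fin.natAdd p j)⟩
  · rintro ⟨h1, h2⟩ i
    obtain ⟨w, rfl⟩ := finSumFinEquiv.surjective i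
    cases w with
    | inl j => rw [finSplit_apply]; exact h1 j
    | inr j => rw [finSplit_apply]; exact h2 j

noncomputable def Sind (N : ℕ) (t : ℝ) (c : Fin N → ℝ) : (Fin N → ℝ) → ENNReal :=
  fun x => Set.indicator {y : Fin N → ℝ | (∀ i, 0 ≤ y i) ∧ ∑ i, y i < t}
    (fun y => ENNReal.ofReal (Real.exp (∑ i, y i * c i))) x

lemma Sind_of_mem {N : ℕ} {t : ℝ} {c : Fin N → ℝ} {x : Fin N → ℝ}
    (h1 : ∀ i, 0 ≤ x i) (h2 : ∑ i, x i < t) :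
    Sind N t c x = ENNReal.ofReal (Real.exp (∑ i, x i * c i)) :=
  Set.indicator_of_mem (by exact ⟨h1, h2⟩) _

lemma Sind_measurable (N : ℕ) (t : ℝ) (c : Fin N → ℝ) : Measurable (Sind N t c) := by
  apply Measurable.indicator _ (aux_measurableSet N t)
  exact ENNReal.measurable_ofReal.comp (Real.measurable_exp.comp
    (Finset.measurable_sum _ fun i _ => by fun_prop))

noncomputable def Eind (c : ℝ) : ℝ → ENNReal :=
  fun w => Set.indicator (Set.Ici 0) (fun w => ENNReal.ofReal (Real.exp (w * c))) w

lemma Eind_measurable (c : ℝ) : Measurable (Eind c) :=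
  Measurable.indicator (ENNReal.measurable_ofReal.comp
    (Real.measurable_exp.comp (measurable_id.mul_const _))) measurableSet_Ici

lemma Eind_lintegral {c : ℝ} (hc : c < 0) : ∫⁻ w : ℝ, Eind c w = ENNReal.ofReal (-c)⁻¹ := by
  have hfun : (fun w : ℝ => ENNReal.ofReal (Real.exp (w * c)))
      = fun w : ℝ => ENNReal.ofReal (Real.exp (-(-c * w))) := by
    funext w; ring_nf
  unfold Eind
  rw [hfun]
  exact aux_lintegral_exp (by linarith)

lemma aux_core (p r s : ℕ) (t : ℝ) (ht : 0 < t) (c : Fin (p + (r + s)) → ℝ)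
    (hneg : ∀ j : Fin p, c (Fin.castAdd (r+s) j) < 0)
    (hzero : ∀ j : Fin s, c (Fin.natAdd p (Fin.natAdd r j)) = 0) :
    ∫⁻ x : Fin (p + (r+s)) → ℝ, Sind (p+(r+s)) t c x
    ≤ (∏ j : Fin p, ENNReal.ofReal (-(c (Fin.castAdd (r+s) j)))⁻¹) *
      ((∫⁻ z : Fin r → ℝ, Sind r t (fun i => c (Fin.natAdd p (Fin.castAdd s i))) z) *
      ENNReal.ofReal (t ^ s / s.factorial)) := by
  classical
  -- step 1: transfer to product space
  rw [← (finSplit_mp p (r+s)).lintegral_comp (Sind_measurable _ t c)]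
  -- pointwise bound
  have hbound : ∀ uv : (Fin p → ℝ) × (Fin (r+s) → ℝ),
      Sind (p+(r+s)) t c (finSplit p (r+s) uv)
      ≤ (∏ j : Fin p, Eind (c (Fin.castAdd (r+s) j)) (uv.1 j)) *
        Sind (r+s) t (fun i => c (Fin.natAdd p i)) uv.2 := by
    rintro ⟨u, v⟩
    by_cases hmem : finSplit p (r+s) (u, v) ∈
        {y : Fin (p+(r+s)) → ℝ | (∀ i, 0 ≤ y i) ∧ ∑ i, y i < t}
    · obtain ⟨hpos, hsum⟩ := hmem
      obtain ⟨hu, hv⟩ := (finSplit_nonneg p (r+s) u v).mp hpos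
      have hsum_split : ∑ i, finSplit p (r+s) (u, v) i = (∑ j, u j) + ∑ j, v j := by
        simpa using finSplit_sum p (r+s) u v (fun _ w => w)
      have hwsum : ∑ i, finSplit p (r+s) (u, v) i * c i
          = (∑ j : Fin p, u j * c (Fin.castAdd (r+s) j))
            + ∑ j : Fin (r+s), v j * c (Fin.natAdd p j) :=
        finSplit_sum p (r+s) u v (fun i w => w * c i)
      have hvsum : ∑ j, v j < t := by
        have : (0:ℝ) ≤ ∑ j, u j := Finset.sum_nonneg fun j _ => hu j
        rw [hsum_split] at hsum; linarith
      rw [Sind_of_mem hpos hsum, Sind_of_mem hv hvsum]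
      have hH1u : (∏ j : Fin p, Eind (c (Fin.castAdd (r+s) j)) (u j))
          = ENNReal.ofReal (Real.exp (∑ j : Fin p, u j * c (Fin.castAdd (r+s) j))) := by
        have he : ∀ j : Fin p, Eind (c (Fin.castAdd (r+s) j)) (u j)
            = ENNReal.ofReal (Real.exp (u j * c (Fin.castAdd (r+s) j))) := fun j =>
          Set.indicator_of_mem (hu j) _
        rw [Finset.prod_congr rfl fun j _ => he j,
          ← ENNReal.ofReal_prod_of_nonneg fun j _ => (Real.exp_pos _).le, ← Real.exp_sum]
      rw [hH1u, hwsum, ← ENNReal.ofReal_mul (Real.exp_pos _).le, ← Real.exp_add]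
    · rw [Sind, Set.indicator_of_notMem hmem]
      exact zero_le
  refine le_trans (lintegral_mono fun uv => hbound uv) ?_
  rw [MeasureTheory.Measure.volume_eq_prod, lintegral_prod_mul
    (f := fun u : Fin p → ℝ => ∏ j : Fin p, Eind (c (Fin.castAdd (r+s) j)) (u j))
    (g := Sind (r+s) t fun i => c (Fin.natAdd p i))
    (Finset.measurable_prod Finset.univ (fun (j : Fin p) _ =>
      (Eind_measurable _).comp (measurable_pi_apply j))).aemeasurable
    (Sind_measurable (r+s) t _).aemeasurable]
  -- first factor
  have hfac1 : (∫⁻ u : Fin p → ℝ, ∏ j : Fin p, Eind (c (Fin.castAdd (r+s) j)) (u j))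
      = ∏ j : Fin p, ENNReal.ofReal (-(c (Fin.castAdd (r+s) j)))⁻¹ := by
    rw [aux_lintegral_pi_prod _ (fun j => Eind_measurable _)]
    exact Finset.prod_congr rfl fun j _ => Eind_lintegral (hneg j)
  -- second factor
  have hfac2 : (∫⁻ v : Fin (r+s) → ℝ, Sind (r+s) t (fun i => c (Fin.natAdd p i)) v)
      ≤ (∫⁻ z : Fin r → ℝ, Sind r t (fun i => c (Fin.natAdd p (Fin.castAdd s i))) z) *
      ENNReal.ofReal (t ^ s / s.factorial) := by
    rw [← (finSplit_mp r s).lintegral_comp (Sind_measurable _ t _)]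
    have hbound2 : ∀ zw : (Fin r → ℝ) × (Fin s → ℝ),
        Sind (r+s) t (fun i => c (Fin.natAdd p i)) (finSplit r s zw)
        ≤ Sind r t (fun i => c (Fin.natAdd p (Fin.castAdd s i))) zw.1 *
          Sind s t (fun _ => 0) zw.2 := by
      rintro ⟨z, w⟩
      by_cases hmem : finSplit r s (z, w) ∈
          {y : Fin (r+s) → ℝ | (∀ i, 0 ≤ y i) ∧ ∑ i, y i < t}
      · obtain ⟨hpos, hsum⟩ := hmem
        obtain ⟨hz, hw⟩ := (finSplit_nonneg r s z w).mp hpos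
        have hsum_split : ∑ i, finSplit r s (z, w) i = (∑ j, z j) + ∑ j, w j := by
          simpa using finSplit_sum r s z w (fun _ x => x)
        have hzsum_nonneg : (0:ℝ) ≤ ∑ j, z j := Finset.sum_nonneg fun j _ => hz j
        have hwsum_nonneg : (0:ℝ) ≤ ∑ j, w j := Finset.sum_nonneg fun j _ => hw j
        have hzlt : ∑ j, z j < t := by rw [hsum_split] at hsum; linarith
        have hwlt : ∑ j, w j < t := by rw [hsum_split] at hsum; linarith
        have hwsum : ∑ i, finSplit r s (z, w) i * c (Fin.natAdd p i)
            = ∑ j : Fin r, z j * c (Fin.natAdd p (Fin.castAdd s j)) := by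
          rw [finSplit_sum r s z w (fun i x => x * c (Fin.natAdd p i))]
          have hz0 : ∀ j : Fin s, w j * c (Fin.natAdd p (Fin.natAdd r j)) = 0 := by
            intro j; rw [hzero j, mul_zero]
          rw [Finset.sum_congr rfl fun j _ => hz0 j]
          simp
        rw [Sind_of_mem hpos hsum, Sind_of_mem hz hzlt, Sind_of_mem hw hwlt, hwsum]
        simp
      · rw [Sind, Set.indicator_of_notMem hmem]
        exact zero_le
    refine le_trans (lintegral_mono fun zw => hbound2 zw) ?_
    rw [MeasureTheory.Measure.volume_eq_prod, lintegral_prod_mul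
      (Sind_measurable r t _).aemeasurable (Sind_measurable s t _).aemeasurable]
    have hH4int : (∫⁻ w : Fin s → ℝ, Sind s t (fun _ => 0) w)
        = ENNReal.ofReal (t ^ s / s.factorial) := by
      have : Sind s t (fun _ => 0) = Set.indicator
          {y : Fin s → ℝ | (∀ i, 0 ≤ y i) ∧ ∑ i, y i < t} (fun _ => (1:ENNReal)) := by
        funext w
        unfold Sind
        congr 1
        funext y
        simp
      rw [this, lintegral_indicator (aux_measurableSet s t), lintegral_one,
        Measure.restrict_apply_univ]
      exact aux_volume_simplex s t ht
    rw [hH4int]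
  rw [hfac1]
  exact mul_le_mul_right hfac2 _

lemma aux_real_eq (N : ℕ) (t : ℝ) (c : Fin N → ℝ) :
    (∫ x : Fin N → ℝ, Set.indicator {y : Fin N → ℝ | (∀ i, 0 ≤ y i) ∧ ∑ i, y i < t}
      (fun y => Real.exp (∑ i, y i * c i)) x) = (∫⁻ x, Sind N t c x).toReal := by
  rw [MeasureTheory.integral_eq_lintegral_of_nonneg_ae
    (ae_of_all _ (Set.indicator_nonneg fun y _ => (Real.exp_pos _).le))
    (Measurable.aestronglyMeasurable (Measurable.indicator
      (Real.measurable_exp.comp (Finset.measurable_sum _ fun i _ =>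
        by fun_prop)) (aux_measurableSet N t)))]
  congr 1
  apply lintegral_congr
  intro x
  unfold Sind
  by_cases hx : x ∈ {y : Fin N → ℝ | (∀ i, 0 ≤ y i) ∧ ∑ i, y i < t}
  · rw [Set.indicator_of_mem hx, Set.indicator_of_mem hx]
  · rw [Set.indicator_of_notMem hx, Set.indicator_of_notMem hx, ENNReal.ofReal_zero]

lemma Sind_reindex {N N' : ℕ} (h : N = N') (t : ℝ) (c : Fin N → ℝ) :
    ∫⁻ x : Fin N → ℝ, Sind N t c x
      = ∫⁻ x : Fin N' → ℝ, Sind N' t (fun j => c (Fin.cast h.symm j)) x := by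
  set c' : Fin N' → ℝ := fun j => c (Fin.cast h.symm j) with hc'
  have mp : MeasurePreserving
      (MeasurableEquiv.piCongrLeft (fun _ : Fin N' => ℝ) (finCongr h)) volume volume :=
    volume_measurePreserving_piCongrLeft _ (finCongr h)
  rw [← mp.lintegral_comp (Sind_measurable N' t c')]
  apply lintegral_congr
  intro x
  have happ : ∀ j : Fin N',
      (MeasurableEquiv.piCongrLeft (fun _ : Fin N' => ℝ) (finCongr h)) x j
        = x (Fin.cast h.symm j) := by
    intro j
    conv_lhs => rw [← (finCongr h).apply_symm_apply j]
    rw [MeasurableEquiv.coe_piCongrLeft]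
    rw [Equiv.piCongrLeft_apply_apply]
    simp
  have hsum1 : ∑ j : Fin N',
      (MeasurableEquiv.piCongrLeft (fun _ : Fin N' => ℝ) (finCongr h)) x j = ∑ i, x i := by
    rw [Finset.sum_congr rfl fun j _ => happ j]
    exact Fintype.sum_equiv (finCongr h).symm _ _ (fun i => rfl)
  have hsum2 : ∑ j : Fin N',
      (MeasurableEquiv.piCongrLeft (fun _ : Fin N' => ℝ) (finCongr h)) x j * c' j
        = ∑ i, x i * c i := by
    rw [Finset.sum_congr rfl fun j _ => by rw [happ j]]
    exact Fintype.sum_equiv (finCongr h).symm _ _ (fun i => rfl)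
  have hposiff : (∀ j, 0 ≤ (MeasurableEquiv.piCongrLeft (fun _ : Fin N' => ℝ) (finCongr h)) x j)
      ↔ ∀ i, 0 ≤ x i := by
    constructor
    · intro hj i
      have := hj (Fin.cast h i)
      rw [happ] at this
      simpa using this
    · intro hi j
      rw [happ]
      exact hi _
  unfold Sind
  by_cases hx : (∀ i, 0 ≤ x i) ∧ ∑ i, x i < t
  · have hmemL : (MeasurableEquiv.piCongrLeft (fun _ : Fin N' => ℝ) (finCongr h)) x
        ∈ {y : Fin N' → ℝ | (∀ i, 0 ≤ y i) ∧ ∑ i, y i < t} :=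
      ⟨hposiff.mpr hx.1, by rw [hsum1]; exact hx.2⟩
    have hmemR : x ∈ {y : Fin N → ℝ | (∀ i, 0 ≤ y i) ∧ ∑ i, y i < t} := hx
    rw [Set.indicator_of_mem hmemL, Set.indicator_of_mem hmemR]
    rw [hsum2]
  · have hmemL : (MeasurableEquiv.piCongrLeft (fun _ : Fin N' => ℝ) (finCongr h)) x
        ∉ {y : Fin N' → ℝ | (∀ i, 0 ≤ y i) ∧ ∑ i, y i < t} := by
      intro hmem
      exact hx ⟨hposiff.mp hmem.1, by rw [← hsum1]; exact hmem.2⟩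
    have hmemR : x ∉ {y : Fin N → ℝ | (∀ i, 0 ≤ y i) ∧ ∑ i, y i < t} := hx
    rw [Set.indicator_of_notMem hmemL, Set.indicator_of_notMem hmemR]

lemma Sind_le_vol {N : ℕ} {t : ℝ} (ht : 0 < t) {c : Fin N → ℝ} (hc : ∀ j, c j ≤ 0) :
    ∫⁻ x : Fin N → ℝ, Sind N t c x ≤ ENNReal.ofReal (t ^ N / N.factorial) := by
  rw [← aux_volume_simplex N t ht]
  have : ∀ x : Fin N → ℝ, Sind N t c x ≤
      Set.indicator {y : Fin N → ℝ | (∀ i, 0 ≤ y i) ∧ ∑ i, y i < t} (fun _ => 1) x := by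
    intro x
    unfold Sind
    by_cases hx : x ∈ {y : Fin N → ℝ | (∀ i, 0 ≤ y i) ∧ ∑ i, y i < t}
    · rw [Set.indicator_of_mem hx, Set.indicator_of_mem hx]
      rw [ENNReal.ofReal_le_one]
      rw [Real.exp_le_one_iff]
      exact Finset.sum_nonpos fun j _ => mul_nonpos_of_nonneg_of_nonpos (hx.1 j) (hc j)
    · rw [Set.indicator_of_notMem hx]
      exact zero_le
  refine le_trans (lintegral_mono this) ?_
  rw [lintegral_indicator (aux_measurableSet N t), lintegral_one, Measure.restrict_apply_univ]


end AuxStatement10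

open Real Set

/-- The function `I_n(t; a_0,…,a_n)` of the paper:
`I_n(t;a) = e^{t a_n} ∫_{ℝ₊^n} exp{Σ_{i<n} x_i(a_i−a_n)} 1{Σ_{i<n} x_i < t} dx`. -/
noncomputable def Ifun (n : ℕ) (t : ℝ) (a : Fin (n+1) → ℝ) : ℝ :=
  Real.exp (t * a (Fin.last n)) *
    ∫ x : Fin n → ℝ,
      Set.indicator {y : Fin n → ℝ | (∀ i, 0 ≤ y i) ∧ (∑ i, y i) < t}
        (fun y => Real.exp (∑ i, y i * (a i.castSucc - a (Fin.last n)))) x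

/-- Lemma `L:comp`.  If `a_j < a_n` for `0 ≤ j < n` and `a_j = a_n` for
`n ≤ j ≤ n+m`, then for any `t > 0`, `0 ≤ k ≤ n` and `0 ≤ i ≤ m`,
`I_{n+m}(t;a_0,…,a_{n+m}) ≤ (t^i/i!)·I_{n+m−i−k}(t;a_k,…,a_{n+m−i})·∏_{j=1}^{k} (a_n−a_{j−1})⁻¹`. -/
theorem statement10 (m n : ℕ) (t : ℝ) (ht : 0 < t) (a : Fin (n+m+1) → ℝ)
    (hlt : ∀ j : Fin (n+m+1), j.val < n → a j < a ⟨n, by omega⟩)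
    (heq : ∀ j : Fin (n+m+1), n ≤ j.val → a j = a ⟨n, by omega⟩)
    (k i : ℕ) (hk : k ≤ n) (hi : i ≤ m) :
    Ifun (n+m) t a
      ≤ (t ^ i / (Nat.factorial i)) *
          Ifun (n+m-i-k) t (fun j => a ⟨k + j.val, by have := j.isLt; omega⟩) *
          ∏ j : Fin k, (a ⟨n, by omega⟩ - a ⟨j.val, by have := j.isLt; omega⟩)⁻¹ := by

  unfold Ifun
  simp only
  have hn : n < n + m + 1 := by omega
  have hd : n + m = k + ((n + m - i - k) + i) := by omega
  have hlast : a (Fin.last (n+m)) = a ⟨n, hn⟩ := heq _ (by simp [Fin.last])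
  -- the exponent function on the left
  set cL : Fin (n+m) → ℝ := fun j => a j.castSucc - a (Fin.last (n+m)) with hcL
  -- left real integral to lintegral
  have hL : (∫ x : Fin (n+m) → ℝ,
      Set.indicator {y : Fin (n+m) → ℝ | (∀ i, 0 ≤ y i) ∧ ∑ i, y i < t}
        (fun y => Real.exp (∑ i, y i * (a i.castSucc - a (Fin.last (n+m))))) x)
      = (∫⁻ x : Fin (n+m) → ℝ, Sind (n+m) t cL x).toReal := aux_real_eq _ _ _
  rw [hL]
  -- right real integral to lintegral
  set cR : Fin (n+m-i-k) → ℝ := fun x => a ⟨k + (x.castSucc : Fin (n+m-i-k+1)).val,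
      by have := x.isLt; omega⟩ - a ⟨k + (Fin.last (n+m-i-k)).val, by omega⟩ with hcR
  have hR : (∫ x : Fin (n+m-i-k) → ℝ,
      Set.indicator {y : Fin (n+m-i-k) → ℝ | (∀ i, 0 ≤ y i) ∧ ∑ i, y i < t}
        (fun y => Real.exp (∑ x : Fin (n+m-i-k), y x * (a ⟨k + (x.castSucc : Fin (n+m-i-k+1)).val,
          by have := x.isLt; omega⟩ - a ⟨k + (Fin.last (n+m-i-k)).val, by omega⟩))) x)
      = (∫⁻ z : Fin (n+m-i-k) → ℝ, Sind (n+m-i-k) t cR z).toReal := aux_real_eq _ _ _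
  rw [hR]
  -- canonical middle exponent function
  set cmid : Fin (n+m-i-k) → ℝ := fun j => a ⟨k + j.val, by have := j.isLt; omega⟩ - a ⟨n, hn⟩
    with hcmid
  have hcReq : cR = cmid := by
    funext j
    rw [hcR, hcmid]
    beta_reduce
    have h1 : (⟨k + (j.castSucc : Fin (n+m-i-k+1)).val, by have := j.isLt; omega⟩ : Fin (n+m+1))
        = ⟨k + j.val, by have := j.isLt; omega⟩ := Fin.ext (by simp)
    rw [h1, heq ⟨k + (Fin.last (n+m-i-k)).val, by omega⟩ (by simp [Fin.last]; omega)]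
  rw [hcReq]
  -- the reindexed exponent function
  set c' : Fin (k + ((n + m - i - k) + i)) → ℝ := fun j => cL (Fin.cast hd.symm j) with hc'
  have h2 : (∫⁻ x : Fin (n+m) → ℝ, Sind (n+m) t cL x)
      = ∫⁻ x : Fin (k + ((n + m - i - k) + i)) → ℝ, Sind _ t c' x := Sind_reindex hd t cL
  -- hypotheses for the core lemma
  have hneg : ∀ j : Fin k, c' (Fin.castAdd ((n + m - i - k) + i) j) < 0 := by
    intro j
    have hidx : (Fin.cast hd.symm (Fin.castAdd ((n + m - i - k) + i) j)).castSucc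
        = (⟨j.val, by have := j.isLt; omega⟩ : Fin (n+m+1)) := Fin.ext (by simp)
    rw [hc', hcL]
    simp only
    rw [hidx, hlast]
    exact sub_neg.mpr (hlt _ (lt_of_lt_of_le j.isLt hk))
  have hzero : ∀ j : Fin i, c' (Fin.natAdd k (Fin.natAdd (n + m - i - k) j)) = 0 := by
    intro j
    have hidx : (Fin.cast hd.symm (Fin.natAdd k (Fin.natAdd (n + m - i - k) j))).castSucc
        = (⟨k + ((n + m - i - k) + j.val), by have := j.isLt; omega⟩ : Fin (n+m+1)) :=
      Fin.ext (by simp)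
    rw [hc', hcL]
    simp only
    rw [hidx, hlast, heq _ (by simp; omega), sub_self]
  have hcore := aux_core k (n + m - i - k) i t ht c' hneg hzero
  -- middle function equality
  have hcm : (fun i' : Fin (n + m - i - k) =>
      c' (Fin.natAdd k (Fin.castAdd i i'))) = cmid := by
    funext j
    have hidx : (Fin.cast hd.symm (Fin.natAdd k (Fin.castAdd i j))).castSucc
        = (⟨k + j.val, by have := j.isLt; omega⟩ : Fin (n+m+1)) := Fin.ext (by simp)
    rw [hc', hcL]
    simp only
    rw [hidx, hlast, hcmid]
  rw [hcm] at hcore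
  -- abbreviations
  set P : ENNReal := ∏ j : Fin k,
    ENNReal.ofReal (-(c' (Fin.castAdd ((n + m - i - k) + i) j)))⁻¹ with hP
  set M : ENNReal := ∫⁻ z : Fin (n+m-i-k) → ℝ, Sind (n+m-i-k) t cmid z with hM
  set V : ENNReal := ENNReal.ofReal (t ^ i / i.factorial) with hV
  have hLE : (∫⁻ x : Fin (n+m) → ℝ, Sind (n+m) t cL x) ≤ P * (M * V) := by
    rw [h2]; exact hcore
  -- finiteness
  have hcmid_nonpos : ∀ j, cmid j ≤ 0 := by
    intro j
    rw [hcmid]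
    simp only
    rcases lt_or_ge (k + j.val) n with h | h
    · exact sub_nonpos.mpr (le_of_lt (hlt _ h))
    · exact sub_nonpos.mpr (le_of_eq (heq _ h))
  have hMle : M ≤ ENNReal.ofReal (t ^ (n+m-i-k) / (n+m-i-k).factorial) :=
    Sind_le_vol ht hcmid_nonpos
  have hMne : M ≠ ⊤ := ne_top_of_le_ne_top ENNReal.ofReal_ne_top hMle
  have hPne : P ≠ ⊤ := by
    rw [hP]
    exact (ENNReal.prod_lt_top fun j _ => ENNReal.ofReal_lt_top).ne
  have hRHSne : P * (M * V) ≠ ⊤ :=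
    ENNReal.mul_ne_top hPne (ENNReal.mul_ne_top hMne ENNReal.ofReal_ne_top)
  -- toReal computations
  have hPval : ∀ j : Fin k, -(c' (Fin.castAdd ((n + m - i - k) + i) j))
      = a ⟨n, hn⟩ - a ⟨j.val, by have := j.isLt; omega⟩ := by
    intro j
    have hidx : (Fin.cast hd.symm (Fin.castAdd ((n + m - i - k) + i) j)).castSucc
        = (⟨j.val, by have := j.isLt; omega⟩ : Fin (n+m+1)) := Fin.ext (by simp)
    rw [hc', hcL]
    simp only
    rw [hidx, hlast, neg_sub]
  have hPtoReal : P.toReal = ∏ j : Fin k,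
      (a ⟨n, hn⟩ - a ⟨j.val, by have := j.isLt; omega⟩)⁻¹ := by
    rw [hP, ENNReal.toReal_prod]
    refine Finset.prod_congr rfl fun j _ => ?_
    rw [hPval j]
    refine ENNReal.toReal_ofReal (inv_nonneg.mpr (sub_nonneg.mpr (le_of_lt ?_)))
    exact hlt _ (lt_of_lt_of_le j.isLt hk)
  have hVtoReal : V.toReal = t ^ i / i.factorial :=
    ENNReal.toReal_ofReal (div_nonneg (pow_nonneg ht.le i) (Nat.cast_nonneg _))
  have hfinal : (∫⁻ x : Fin (n+m) → ℝ, Sind (n+m) t cL x).toReal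
      ≤ t ^ i / i.factorial * M.toReal * ∏ j : Fin k,
          (a ⟨n, hn⟩ - a ⟨j.val, by have := j.isLt; omega⟩)⁻¹ := by
    refine le_trans (ENNReal.toReal_mono hRHSne hLE) ?_
    rw [ENNReal.toReal_mul, ENNReal.toReal_mul, hPtoReal, hVtoReal]
    ring_nf
    exact le_refl _
  -- final assembly
  rw [hlast]
  have hmid2 : a ⟨k + (Fin.last (n+m-i-k)).val, by omega⟩ = a ⟨n, hn⟩ := by
    refine heq _ ?_
    simp [Fin.last]
    omega
  rw [hmid2]
  have hre : t ^ i / (i.factorial : ℝ) *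
      (Real.exp (t * a ⟨n, hn⟩) * M.toReal) *
      (∏ j : Fin k, (a ⟨n, hn⟩ - a ⟨j.val, by have := j.isLt; omega⟩)⁻¹)
      = Real.exp (t * a ⟨n, hn⟩) * (t ^ i / i.factorial * M.toReal *
        ∏ j : Fin k, (a ⟨n, hn⟩ - a ⟨j.val, by have := j.isLt; omega⟩)⁻¹) := by ring
  rw [hre]
  exact mul_le_mul_of_nonneg_left hfinal (Real.exp_nonneg _)
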